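/- Let S_t = σ_t(M_t) be an information state with cost distribution ρ, let π : 𝒮 × (0,1] → 𝒰 be a time-invariant control law with induced memory-based strategy g given by g_t(m_t) = π(σ_t(m_t), γ^t), and let 𝒯(π) be the law-dependent operator. Then for every n ∈ ℕ, every t ∈ ℕ and every realization m_t of the memory: γ^{n+t}·c^min/(1−γ) + γ^t·[𝒯(π)^n Λ^0](σ_t(m_t), γ^t) + sup_{a_t ∈ [[A_t | m_t]]} a_t ≤ V_t^g(m_t) ≤ sup_{a_t ∈ [[A_t | m_t]]} a_t + γ^t·[𝒯(π)^n Λ^0](σ_t(m_t), γ^t) + γ^{n+t}·c^max/(1−γ), where Λ^0 ≡ 0. -/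

import Mathlib

open Set Filter

noncomputable section

/-- Hausdorff distance built from an arbitrary distance function `η`,
`ℋ(A,B) = max{sup_{a∈A} inf_{b∈B} η a b, sup_{b∈B} inf_{a∈A} η a b}`. -/
def hausd {α : Type*} (η : α → α → ℝ) (A B : Set α) : ℝ :=
  max (sSup ((fun a => sInf ((fun b => η a b) '' B)) '' A))
      (sSup ((fun b => sInf ((fun a => η a b) '' A)) '' B))

/-- The time-invariant DP operator `𝒯` for general information states:
`[𝒯Λ](s,z) = inf_u sup_{c,s'} (c + γ·Λ(s',γz) + ρ(c,s'|s,u)/z)`, the sup being over the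
support of the cost distribution `ρ` (off the support `ρ = −∞`). -/
def DPop {Ss Uu : Type*} (γ : ℝ) (ρ : ℝ → Ss → Ss → Uu → EReal)
    (Λ : Ss → ℝ → ℝ) (s : Ss) (z : ℝ) : ℝ :=
  sInf (Set.range fun u : Uu => sSup ((fun p : ℝ × Ss =>
    p.1 + γ * Λ p.2 (γ * z) + (ρ p.1 p.2 s u).toReal / z) '' {p | ρ p.1 p.2 s u ≠ ⊥}))

/-- Iterates `Λ^n = 𝒯^n Λ^0` starting from `Λ^0 ≡ 0`. -/
def DPopIter {Ss Uu : Type*} (γ : ℝ) (ρ : ℝ → Ss → Ss → Uu → EReal) : ℕ → Ss → ℝ → ℝ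
  | 0 => fun _ _ => 0
  | (n+1) => DPop γ ρ (DPopIter γ ρ n)

/-- The law-dependent operator `𝒯(π)`. -/
def DPopLaw {Ss Uu : Type*} (γ : ℝ) (ρ : ℝ → Ss → Ss → Uu → EReal) (π : Ss → ℝ → Uu)
    (Λ : Ss → ℝ → ℝ) (s : Ss) (z : ℝ) : ℝ :=
  sSup ((fun p : ℝ × Ss =>
    p.1 + γ * Λ p.2 (γ * z) + (ρ p.1 p.2 s (π s z)).toReal / z) '' {p | ρ p.1 p.2 s (π s z) ≠ ⊥})

/-- Iterates `𝒯(π)^n Λ^0` starting from `Λ^0 ≡ 0`. -/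
def DPopLawIter {Ss Uu : Type*} (γ : ℝ) (ρ : ℝ → Ss → Ss → Uu → EReal) (π : Ss → ℝ → Uu) :
    ℕ → Ss → ℝ → ℝ
  | 0 => fun _ _ => 0
  | (n+1) => DPopLaw γ ρ π (DPopLawIter γ ρ π n)

/-- The time-invariant DP operator `𝒯̄` for problems with observable costs:
`[𝒯̄Λ̄](s̄) = inf_u sup_{(c,s̄') ∈ F(s̄,u)} (c + γ·Λ̄(s̄'))` where `F s̄ u = [[C, S̄' | s̄, u]]`. -/
def DPopB {Sb Uu : Type*} (γ : ℝ) (F : Sb → Uu → Set (ℝ × Sb)) (Λ : Sb → ℝ) (s : Sb) : ℝ :=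
  sInf (Set.range fun u : Uu => sSup ((fun p : ℝ × Sb => p.1 + γ * Λ p.2) '' F s u))

/-- Iterates `Λ̄^n = 𝒯̄^n Λ̄^0` starting from `Λ̄^0 ≡ 0`. -/
def DPopBIter {Sb Uu : Type*} (γ : ℝ) (F : Sb → Uu → Set (ℝ × Sb)) : ℕ → Sb → ℝ
  | 0 => fun _ => 0
  | (n+1) => DPopB γ F (DPopBIter γ F n)

/-- The law-dependent observable-cost operator. -/
def DPopBLaw {Sb Uu : Type*} (γ : ℝ) (F : Sb → Uu → Set (ℝ × Sb)) (π : Sb → Uu)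
    (Λ : Sb → ℝ) (s : Sb) : ℝ :=
  sSup ((fun p : ℝ × Sb => p.1 + γ * Λ p.2) '' F s (π s))

/-- `β_t(T)` error coefficients, fuel-indexed: `beta γ e k t = β_t(t+k)` with
`β_T(T) = γ^T·e` and `β_t(T) = β_{t+1}(T) + γ^t·e`. -/
def beta (γ e : ℝ) : ℕ → ℕ → ℝ
  | 0, t => γ ^ t * e
  | (k+1), t => beta γ e k (t+1) + γ ^ t * e

/-- A partially observed non-stochastic input–output system with bounded costs:
disturbances `W_t ∈ 𝒲`, actions `U_t ∈ 𝒰`, observations `Y_0 = h_0(W_0)`,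
`Y_{t+1} = h_{t+1}(W_{0:t}, U_{0:t})`, and costs `C_t = d_t(W_{0:t}, U_{0:t}) ∈ 𝒞 ⊆ [cmin, cmax] ⊂ ℝ≥0`,
with a discount factor `γ ∈ (0,1)`. -/
structure Sys where
  W : Type
  U : Type
  Y : Type
  [hW : Nonempty W]
  [hU : Nonempty U]
  [hY : Nonempty Y]
  γ : ℝ
  cmin : ℝ
  cmax : ℝ
  h0 : W → Y
  h : (t : ℕ) → (Fin (t+1) → W) → (Fin (t+1) → U) → Y
  d : (t : ℕ) → (Fin (t+1) → W) → (Fin (t+1) → U) → ℝ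
  hγ0 : 0 < γ
  hγ1 : γ < 1
  hcmin : 0 ≤ cmin
  hcost : ∀ t ω υ, d t ω υ ∈ Set.Icc cmin cmax

attribute [instance] Sys.hW Sys.hU Sys.hY

namespace Sys

variable (S : Sys)

/-- `a^max = c^max/(1-γ)`. -/
def amax : ℝ := S.cmax / (1 - S.γ)

/-- Memory space at time `t`: `M_t = (Y_{0:t}, U_{0:t-1})`. -/
abbrev Mem (t : ℕ) : Type := (Fin (t+1) → S.Y) × (Fin t → S.U)

/-- Control strategies `g = (g_0, g_1, …)`, `U_t = g_t(M_t)`. -/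
abbrev Strat : Type := (t : ℕ) → S.Mem t → S.U

/-- The memory realization at time `0` generated by an initial observation `y_0`. -/
def mem0 (y : S.Y) : S.Mem 0 := (fun _ => y, Fin.elim0)

/-- Open-loop observation `Y_s` generated by disturbances `ω` and actions `u_{0:s-1}`. -/
def oy (ω : ℕ → S.W) : (s : ℕ) → (Fin s → S.U) → S.Y
  | 0, _ => S.h0 (ω 0)
  | (t+1), υ => S.h t (fun i : Fin (t+1) => ω i) υ

/-- Open-loop cost `C_t` generated by disturbances `ω` and actions `u_{0:t}`. -/
def oc (ω : ℕ → S.W) (t : ℕ) (υ : Fin (t+1) → S.U) : ℝ :=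
  S.d t (fun i : Fin (t+1) => ω i) υ

/-- Open-loop accrued cost `A_t = Σ_{ℓ<t} γ^ℓ C_ℓ`. -/
def oA (ω : ℕ → S.W) (t : ℕ) (υ : Fin t → S.U) : ℝ :=
  ∑ ℓ : Fin t, S.γ ^ (ℓ : ℕ) *
    S.oc ω ℓ (fun j : Fin ((ℓ : ℕ) + 1) => υ ⟨j, by have := j.isLt; have := ℓ.isLt; omega⟩)

/-- Open-loop memory at time `t` generated by disturbances `ω` and actions `u_{0:t-1}`. -/
def omem (ω : ℕ → S.W) (t : ℕ) (υ : Fin t → S.U) : S.Mem t :=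
  (fun i : Fin (t+1) =>
    S.oy ω i (fun j : Fin (i : ℕ) => υ ⟨j, by have := j.isLt; have := i.isLt; omega⟩), υ)

/-- Disturbance realizations consistent with the memory realization `m_t`. -/
def consistent (t : ℕ) (m : S.Mem t) : Set (ℕ → S.W) := {ω | S.omem ω t m.2 = m}

/-- `[[A_t | m_t]]`, the conditional range of the accrued cost. -/
def Arange (t : ℕ) (m : S.Mem t) : Set ℝ :=
  (fun ω => S.oA ω t m.2) '' S.consistent t m

/-- Closed-loop memory `M_t` generated by strategy `g` and disturbances `ω`. -/
def memOf (g : S.Strat) (ω : ℕ → S.W) : (t : ℕ) → S.Mem t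
  | 0 => (fun _ => S.h0 (ω 0), Fin.elim0)
  | (t+1) =>
    let m := memOf g ω t
    let us : Fin (t+1) → S.U := Fin.snoc m.2 (g t m)
    (Fin.snoc m.1 (S.h t (fun i : Fin (t+1) => ω i) us), us)

/-- Closed-loop action `U_t = g_t(M_t)`. -/
def act (g : S.Strat) (ω : ℕ → S.W) (t : ℕ) : S.U := g t (S.memOf g ω t)

/-- Closed-loop cost `C_t`. -/
def ccost (g : S.Strat) (ω : ℕ → S.W) (t : ℕ) : ℝ :=
  S.d t (fun i : Fin (t+1) => ω i) (fun i : Fin (t+1) => S.act g ω i)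

/-- Closed-loop accrued cost `A_t = Σ_{ℓ<t} γ^ℓ C_ℓ`. -/
def cA (g : S.Strat) (ω : ℕ → S.W) (t : ℕ) : ℝ :=
  ∑ ℓ ∈ Finset.range t, S.γ ^ ℓ * S.ccost g ω ℓ

/-- Closed-loop cost-to-go `C_t^∞ = Σ_{ℓ≥t} γ^{ℓ-t} C_ℓ`. -/
def cCinf (g : S.Strat) (ω : ℕ → S.W) (t : ℕ) : ℝ :=
  ∑' k : ℕ, S.γ ^ k * S.ccost g ω (t + k)

/-- Strategy value function
`V_t^g(m_t) = sup_{(a,c^∞) ∈ [[A_t, C_t^∞ | m_t]]^g} (a + γ^t c^∞)`. -/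
def V (g : S.Strat) (t : ℕ) (m : S.Mem t) : ℝ :=
  sSup ((fun ω => S.cA g ω t + S.γ ^ t * S.cCinf g ω t) '' {ω | S.memOf g ω t = m})

/-- Optimal value function `V_t(m_t) = inf_g V_t^g(m_t)`
(the infimum over strategies consistent with the realization `m_t`). -/
def Vopt (t : ℕ) (m : S.Mem t) : ℝ :=
  sInf ((fun g => S.V g t m) '' {g : S.Strat | ∃ ω, S.memOf g ω t = m})

/-- Strategy-dependent finite-horizon function, fuel-indexed:
`Jg g n t m = J_t^g(m_t; t+n)` with `J_T^g(m_T;T) = sup_{[[A_T,C_T|m_T]]^g}(a_T + γ^T c_T)` and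
`J_t^g(m_t;T) = sup_{m_{t+1} ∈ [[M_{t+1}|m_t]]^g} J_{t+1}^g(m_{t+1};T)`. -/
def Jg (g : S.Strat) : ℕ → (t : ℕ) → S.Mem t → ℝ
  | 0, t, m => sSup ((fun ω => S.cA g ω t + S.γ ^ t * S.ccost g ω t) '' {ω | S.memOf g ω t = m})
  | (n+1), t, m =>
    sSup ((fun ω => Jg g n (t+1) (S.memOf g ω (t+1))) '' {ω | S.memOf g ω t = m})

/-- Optimal finite-horizon function, fuel-indexed: `Jopt n t m = J_t(m_t; t+n)` with
`J_T(m_T;T) = inf_{u_T} sup_{[[A_T,C_T|m_T,u_T]]}(a_T + γ^T c_T)` and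
`J_t(m_t;T) = inf_{u_t} sup_{m_{t+1} ∈ [[M_{t+1}|m_t,u_t]]} J_{t+1}(m_{t+1};T)`. -/
def Jopt : ℕ → (t : ℕ) → S.Mem t → ℝ
  | 0, t, m => sInf (Set.range fun u : S.U =>
      sSup ((fun ω => S.oA ω t m.2 + S.γ ^ t * S.oc ω t (Fin.snoc m.2 u)) '' S.consistent t m))
  | (n+1), t, m => sInf (Set.range fun u : S.U =>
      sSup ((fun ω => Jopt n (t+1) (S.omem ω (t+1) (Fin.snoc m.2 u))) '' S.consistent t m))

/-- The conditional accrued distribution `r_t((c,s) | m_t, u_t)` of the pair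
`(C_t, S_{t+1})` where `S_{t+1} = σ_{t+1}(M_{t+1})`:
`r_t(x|y) = sup_{a ∈ [0,a^max]}(a + 𝕀(x,a|y)) − sup_{a ∈ [0,a^max]}(a + 𝕀(a|y))` in `ℝ ∪ {−∞}`. -/
def rcs {Ss : Type*} (σ : (t : ℕ) → S.Mem t → Ss) (t : ℕ) (c : ℝ) (s : Ss)
    (m : S.Mem t) (u : S.U) : EReal :=
  sSup ((fun a : ℝ => (a : EReal)) '' {a | a ∈ Set.Icc 0 S.amax ∧ ∃ ω ∈ S.consistent t m,
      S.oc ω t (Fin.snoc m.2 u) = c ∧ σ (t+1) (S.omem ω (t+1) (Fin.snoc m.2 u)) = s ∧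
      S.oA ω t m.2 = a}) -
  sSup ((fun a : ℝ => (a : EReal)) '' {a | a ∈ Set.Icc 0 S.amax ∧ ∃ ω ∈ S.consistent t m,
      S.oA ω t m.2 = a})

/-! ### Observable costs -/

/-- Memory space with observable costs: `M_t = (Y_{0:t}, C_{0:t-1}, U_{0:t-1})`. -/
abbrev MemO (t : ℕ) : Type := (Fin (t+1) → S.Y) × (Fin t → ℝ) × (Fin t → S.U)

/-- Strategies for the observable-cost problem. -/
abbrev StratO : Type := (t : ℕ) → S.MemO t → S.U

/-- The observable-cost memory realization at time `0` from an initial observation. -/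
def memO0 (y : S.Y) : S.MemO 0 := (fun _ => y, Fin.elim0, Fin.elim0)

/-- Open-loop observable-cost memory generated by `ω` and actions `u_{0:t-1}`. -/
def omemO (ω : ℕ → S.W) (t : ℕ) (υ : Fin t → S.U) : S.MemO t :=
  (fun i : Fin (t+1) =>
      S.oy ω i (fun j : Fin (i : ℕ) => υ ⟨j, by have := j.isLt; have := i.isLt; omega⟩),
   fun ℓ : Fin t =>
      S.oc ω ℓ (fun j : Fin ((ℓ : ℕ) + 1) => υ ⟨j, by have := j.isLt; have := ℓ.isLt; omega⟩),
   υ)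

/-- Disturbances consistent with an observable-cost memory realization. -/
def consistentO (t : ℕ) (m : S.MemO t) : Set (ℕ → S.W) := {ω | S.omemO ω t m.2.2 = m}

/-- `[[A_t | m_t]]` for the observable-cost problem. -/
def ArangeO (t : ℕ) (m : S.MemO t) : Set ℝ :=
  (fun ω => S.oA ω t m.2.2) '' S.consistentO t m

/-- Closed-loop observable-cost memory. -/
def memOfO (g : S.StratO) (ω : ℕ → S.W) : (t : ℕ) → S.MemO t
  | 0 => (fun _ => S.h0 (ω 0), Fin.elim0, Fin.elim0)
  | (t+1) =>
    let m := memOfO g ω t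
    let us : Fin (t+1) → S.U := Fin.snoc m.2.2 (g t m)
    (Fin.snoc m.1 (S.h t (fun i : Fin (t+1) => ω i) us),
     Fin.snoc m.2.1 (S.d t (fun i : Fin (t+1) => ω i) us), us)

/-- Closed-loop action for the observable-cost problem. -/
def actO (g : S.StratO) (ω : ℕ → S.W) (t : ℕ) : S.U := g t (S.memOfO g ω t)

/-- Closed-loop cost for the observable-cost problem. -/
def ccostO (g : S.StratO) (ω : ℕ → S.W) (t : ℕ) : ℝ :=
  S.d t (fun i : Fin (t+1) => ω i) (fun i : Fin (t+1) => S.actO g ω i)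

/-- Closed-loop accrued cost for the observable-cost problem. -/
def cAO (g : S.StratO) (ω : ℕ → S.W) (t : ℕ) : ℝ :=
  ∑ ℓ ∈ Finset.range t, S.γ ^ ℓ * S.ccostO g ω ℓ

/-- Closed-loop cost-to-go for the observable-cost problem. -/
def cCinfO (g : S.StratO) (ω : ℕ → S.W) (t : ℕ) : ℝ :=
  ∑' k : ℕ, S.γ ^ k * S.ccostO g ω (t + k)

/-- Strategy value function for the observable-cost problem. -/
def VO (g : S.StratO) (t : ℕ) (m : S.MemO t) : ℝ :=
  sSup ((fun ω => S.cAO g ω t + S.γ ^ t * S.cCinfO g ω t) '' {ω | S.memOfO g ω t = m})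

/-- Optimal value function for the observable-cost problem. -/
def VoptO (t : ℕ) (m : S.MemO t) : ℝ :=
  sInf ((fun g => S.VO g t m) '' {g : S.StratO | ∃ ω, S.memOfO g ω t = m})

/-- Optimal finite-horizon function for the observable-cost problem, fuel-indexed. -/
def JoptO : ℕ → (t : ℕ) → S.MemO t → ℝ
  | 0, t, m => sInf (Set.range fun u : S.U =>
      sSup ((fun ω => S.oA ω t m.2.2 + S.γ ^ t * S.oc ω t (Fin.snoc m.2.2 u)) ''
        S.consistentO t m))
  | (n+1), t, m => sInf (Set.range fun u : S.U =>
      sSup ((fun ω => JoptO n (t+1) (S.omemO ω (t+1) (Fin.snoc m.2.2 u))) '' S.consistentO t m))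

/-- `[[C_t, S̄_{t+1} | m_t, u_t]]`: conditional range of the current cost and next
(information-) state `S̄_{t+1} = σ̄_{t+1}(M_{t+1})` given the memory `m_t` and action `u_t`. -/
def CSrange {Sb : Type*} (σ : (t : ℕ) → S.MemO t → Sb) (t : ℕ) (m : S.MemO t) (u : S.U) :
    Set (ℝ × Sb) :=
  (fun ω => (S.oc ω t (Fin.snoc m.2.2 u), σ (t+1) (S.omemO ω (t+1) (Fin.snoc m.2.2 u)))) ''
    S.consistentO t m

/-- `[[C_t, Y_{t+1} | m_t, u_t]]`. -/
def CYrange (t : ℕ) (m : S.MemO t) (u : S.U) : Set (ℝ × S.Y) :=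
  (fun ω => (S.oc ω t (Fin.snoc m.2.2 u), S.oy ω (t+1) (Fin.snoc m.2.2 u))) '' S.consistentO t m

open Classical in
/-- Conditional indicator `𝕀((c_t, m_{t+1}) | m_t, u_t)` for the observable-cost problem. -/
def indObs (t : ℕ) (c : ℝ) (m' : S.MemO (t+1)) (m : S.MemO t) (u : S.U) : EReal :=
  if ∃ ω ∈ S.consistentO t m,
      S.oc ω t (Fin.snoc m.2.2 u) = c ∧ S.omemO ω (t+1) (Fin.snoc m.2.2 u) = m' then 0 else ⊥

/-- Conditional accrued distribution `r_t((c_t, m_{t+1}) | m_t, u_t)` for the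
observable-cost problem. -/
def rObs (t : ℕ) (c : ℝ) (m' : S.MemO (t+1)) (m : S.MemO t) (u : S.U) : EReal :=
  sSup ((fun a : ℝ => (a : EReal)) '' {a | a ∈ Set.Icc 0 S.amax ∧ ∃ ω ∈ S.consistentO t m,
      S.oc ω t (Fin.snoc m.2.2 u) = c ∧ S.omemO ω (t+1) (Fin.snoc m.2.2 u) = m' ∧
      S.oA ω t m.2.2 = a}) -
  sSup ((fun a : ℝ => (a : EReal)) '' {a | a ∈ Set.Icc 0 S.amax ∧ ∃ ω ∈ S.consistentO t m,
      S.oA ω t m.2.2 = a})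

end Sys


/-! ### Auxiliary lemmas for the proof -/


lemma csSup_affine_image {A : Set ℝ} (hA : A.Nonempty) (hb : BddAbove A) {c : ℝ} (hc : 0 < c)
    (a : ℝ) : sSup ((fun x => c * x + a) '' A) = c * sSup A + a := by
  obtain ⟨M, hM⟩ := hb
  have hbI : BddAbove ((fun x => c * x + a) '' A) := by
    refine ⟨c * M + a, ?_⟩
    rintro y ⟨x, hx, rfl⟩
    dsimp only
    have := hM hx
    nlinarith
  apply le_antisymm
  · refine csSup_le (hA.image _) ?_
    rintro y ⟨x, hx, rfl⟩
    dsimp only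
    have := le_csSup ⟨M, hM⟩ hx
    nlinarith
  · have h2 : sSup A ≤ (sSup ((fun x => c * x + a) '' A) - a) / c := by
      refine csSup_le hA fun x hx => ?_
      have h3 : c * x + a ≤ sSup ((fun x => c * x + a) '' A) :=
        le_csSup hbI ⟨x, hx, rfl⟩
      rw [le_div_iff₀ hc]
      nlinarith
    rw [le_div_iff₀ hc] at h2
    nlinarith

lemma csSup_add_const {A : Set ℝ} (hA : A.Nonempty) (hb : BddAbove A) (a : ℝ) :
    sSup ((fun x => x + a) '' A) = sSup A + a := by
  have := csSup_affine_image hA hb one_pos a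
  simpa using this

lemma csSup_biUnion' {ι α : Type*} {K : Set ι} {C : ι → Set α} {f : α → ℝ}
    (hK : K.Nonempty) (hne : ∀ i ∈ K, (C i).Nonempty)
    (hbdd : BddAbove (f '' ⋃ i ∈ K, C i)) :
    sSup (f '' ⋃ i ∈ K, C i) = sSup ((fun i => sSup (f '' C i)) '' K) := by
  have hsub : ∀ i ∈ K, f '' C i ⊆ f '' ⋃ j ∈ K, C j := fun i hi =>
    image_mono (subset_biUnion_of_mem hi)
  obtain ⟨M, hM⟩ := hbdd
  have hbddK : BddAbove ((fun i => sSup (f '' C i)) '' K) := by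
    refine ⟨M, ?_⟩
    rintro y ⟨i, hi, rfl⟩
    exact csSup_le ((hne i hi).image f) fun z hz => hM (hsub i hi hz)
  apply le_antisymm
  · have hUne : (f '' ⋃ i ∈ K, C i).Nonempty := by
      obtain ⟨i, hi⟩ := hK
      obtain ⟨x, hx⟩ := hne i hi
      exact ⟨f x, ⟨x, mem_biUnion hi hx, rfl⟩⟩
    refine csSup_le hUne ?_
    rintro y ⟨x, hx, rfl⟩
    rw [mem_iUnion₂] at hx
    obtain ⟨i, hi, hxi⟩ := hx
    have h1 : f x ≤ sSup (f '' C i) := le_csSup (⟨M, fun z hz => hM (hsub i hi hz)⟩) ⟨x, hxi, rfl⟩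
    exact h1.trans (le_csSup hbddK ⟨i, hi, rfl⟩)
  · refine csSup_le (hK.image _) ?_
    rintro y ⟨i, hi, rfl⟩
    exact csSup_le ((hne i hi).image f) fun z hz => le_csSup ⟨M, hM⟩ (hsub i hi hz)

lemma ereal_coe_sSup {A : Set ℝ} (h : A.Nonempty) (hb : BddAbove A) :
    sSup (Real.toEReal '' A) = ((sSup A : ℝ) : EReal) := by
  obtain ⟨a0, ha0⟩ := h
  apply le_antisymm
  · refine sSup_le ?_
    rintro x ⟨a, ha, rfl⟩
    exact_mod_cast le_csSup hb ha
  · by_contra hlt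
    push_neg at hlt
    set Sv := sSup (Real.toEReal '' A) with hSv
    have htop : Sv < ⊤ := hlt.trans (EReal.coe_lt_top _)
    have hbot : (⊥ : EReal) < Sv := (EReal.bot_lt_coe a0).trans_le (le_sSup ⟨a0, ha0, rfl⟩)
    have hcoe : ((Sv.toReal : ℝ) : EReal) = Sv := EReal.coe_toReal htop.ne hbot.ne'
    have hub : ∀ a ∈ A, a ≤ Sv.toReal := by
      intro a ha
      have : (a : EReal) ≤ Sv := le_sSup ⟨a, ha, rfl⟩
      rw [← hcoe] at this
      exact_mod_cast this
    have : sSup A ≤ Sv.toReal := csSup_le ⟨a0, ha0⟩ hub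
    have : ((sSup A : ℝ) : EReal) ≤ Sv := by rw [← hcoe]; exact_mod_cast this
    exact absurd this (not_le.mpr hlt)

namespace Sys
variable (S : Sys)

lemma one_sub_γ_pos : 0 < 1 - S.γ := by linarith [S.hγ1]

lemma cmin_le_cmax : S.cmin ≤ S.cmax := by
  have h := S.hcost 0 (fun _ => Classical.arbitrary S.W) (fun _ => Classical.arbitrary S.U)
  exact h.1.trans h.2

lemma cmax_nonneg : 0 ≤ S.cmax := S.hcmin.trans S.cmin_le_cmax

lemma amax_nonneg : 0 ≤ S.amax := div_nonneg S.cmax_nonneg S.one_sub_γ_pos.le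

lemma γpow_pos (t : ℕ) : 0 < S.γ ^ t := pow_pos S.hγ0 t

lemma oc_mem (ω : ℕ → S.W) (t : ℕ) (υ : Fin (t+1) → S.U) :
    S.oc ω t υ ∈ Set.Icc S.cmin S.cmax := S.hcost t _ υ

lemma oA_nonneg (ω : ℕ → S.W) (t : ℕ) (υ : Fin t → S.U) : 0 ≤ S.oA ω t υ :=
  Finset.sum_nonneg fun ℓ _ =>
    mul_nonneg (S.γpow_pos ℓ).le (S.hcmin.trans (S.oc_mem ω ℓ _).1)

lemma sum_geom_le (t : ℕ) : ∑ ℓ ∈ Finset.range t, S.γ ^ ℓ ≤ (1 - S.γ)⁻¹ := by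
  have hs : Summable (fun ℓ : ℕ => S.γ ^ ℓ) := summable_geometric_of_lt_one S.hγ0.le S.hγ1
  have h := Summable.sum_le_tsum (Finset.range t) (fun i _ => (S.γpow_pos i).le) hs
  rwa [tsum_geometric_of_lt_one S.hγ0.le S.hγ1] at h

lemma oA_le_amax (ω : ℕ → S.W) (t : ℕ) (υ : Fin t → S.U) : S.oA ω t υ ≤ S.amax := by
  have h1 : S.oA ω t υ ≤ ∑ ℓ : Fin t, S.γ ^ (ℓ:ℕ) * S.cmax :=
    Finset.sum_le_sum fun ℓ _ =>
      mul_le_mul_of_nonneg_left (S.oc_mem ω ℓ _).2 (S.γpow_pos _).le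
  have h2 : ∑ ℓ : Fin t, S.γ ^ (ℓ:ℕ) * S.cmax = (∑ ℓ ∈ Finset.range t, S.γ ^ ℓ) * S.cmax := by
    rw [Finset.sum_mul]
    exact Fin.sum_univ_eq_sum_range (fun ℓ => S.γ ^ ℓ * S.cmax) t
  have h3 : (∑ ℓ ∈ Finset.range t, S.γ ^ ℓ) * S.cmax ≤ (1 - S.γ)⁻¹ * S.cmax :=
    mul_le_mul_of_nonneg_right (S.sum_geom_le t) S.cmax_nonneg
  calc S.oA ω t υ ≤ _ := h1
    _ = _ := h2
    _ ≤ _ := h3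
    _ = S.amax := by rw [Sys.amax, div_eq_inv_mul]

lemma oc_congr (ω : ℕ → S.W) {t t' : ℕ} (h : t = t') {υ : Fin (t+1) → S.U}
    {υ' : Fin (t'+1) → S.U}
    (hυ : ∀ (j : ℕ) (hj : j < t+1), υ ⟨j, hj⟩ = υ' ⟨j, by omega⟩) :
    S.oc ω t υ = S.oc ω t' υ' := by
  subst h
  have : υ = υ' := funext fun j => by
    have := hυ j j.isLt
    simpa using this
  rw [this]

lemma oA_succ (ω : ℕ → S.W) (t : ℕ) (υ : Fin t → S.U) (u : S.U) :
    S.oA ω (t+1) (Fin.snoc υ u) = S.oA ω t υ + S.γ ^ t * S.oc ω t (Fin.snoc υ u) := by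
  rw [Sys.oA, Sys.oA, Fin.sum_univ_castSucc]
  congr 1
  · refine Finset.sum_congr rfl fun ℓ _ => ?_
    show S.γ ^ (ℓ:ℕ) * S.oc ω (ℓ:ℕ) _ = S.γ ^ (ℓ:ℕ) * S.oc ω (ℓ:ℕ) _
    refine congrArg (fun x => S.γ ^ (ℓ:ℕ) * S.oc ω (ℓ:ℕ) x) (funext fun j => ?_)
    have hcc : ((ℓ.castSucc : Fin (t+1)) : ℕ) = (ℓ : ℕ) := rfl
    have hj : (j:ℕ) < t := by have := j.isLt; have := ℓ.isLt; omega
    exact Fin.snoc_castSucc (α := fun _ : Fin (t+1) => S.U) u υ ⟨(j:ℕ), hj⟩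

/-- Truncation of a memory. -/
def mtrunc {t : ℕ} (m : S.Mem (t+1)) : S.Mem t :=
  (fun i => m.1 i.castSucc, fun i => m.2 i.castSucc)

lemma mtrunc_memOf (g : S.Strat) (ω : ℕ → S.W) (t : ℕ) :
    S.mtrunc (S.memOf g ω (t+1)) = S.memOf g ω t := by
  have h1 : (S.mtrunc (S.memOf g ω (t+1))).1 = (S.memOf g ω t).1 := by
    funext i
    show (Fin.snoc (S.memOf g ω t).1 _ : Fin (t+2) → S.Y) i.castSucc = _
    rw [Fin.snoc_castSucc]
  have h2 : (S.mtrunc (S.memOf g ω (t+1))).2 = (S.memOf g ω t).2 := by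
    funext i
    show (Fin.snoc (S.memOf g ω t).2 _ : Fin (t+1) → S.U) i.castSucc = _
    rw [Fin.snoc_castSucc]
  exact Prod.ext h1 h2

lemma mtrunc_omem (ω : ℕ → S.W) (t : ℕ) (υ : Fin (t+1) → S.U) :
    S.mtrunc (S.omem ω (t+1) υ) = S.omem ω t (Fin.init υ) := rfl

lemma memOf_snd (g : S.Strat) (ω : ℕ → S.W) : ∀ t : ℕ,
    (S.memOf g ω t).2 = fun i : Fin t => S.act g ω i := by
  intro t
  induction t with
  | zero => exact funext fun i => i.elim0
  | succ t ih =>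
    funext i
    show (Fin.snoc (S.memOf g ω t).2 (g t (S.memOf g ω t)) : Fin (t+1) → S.U) i = _
    refine Fin.lastCases ?_ ?_ i
    · rw [Fin.snoc_last]; rfl
    · intro j
      rw [Fin.snoc_castSucc, ih]
      rfl

lemma memOf_eq_omem (g : S.Strat) (ω : ℕ → S.W) : ∀ t : ℕ,
    S.memOf g ω t = S.omem ω t (fun i : Fin t => S.act g ω i) := by
  intro t
  induction t with
  | zero =>
    refine Prod.ext ?_ (funext fun i => i.elim0)
    funext i
    obtain ⟨iv, hlt⟩ := i
    have h0 : iv = 0 := by omega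
    subst h0
    rfl
  | succ t ih =>
    refine Prod.ext ?_ ?_
    · funext i
      refine Fin.lastCases ?_ ?_ i
      · show (Fin.snoc (S.memOf g ω t).1 _ : Fin (t+2) → S.Y) (Fin.last (t+1)) = _
        rw [Fin.snoc_last]
        exact congrArg (S.h t _) (S.memOf_snd g ω (t+1))
      · intro j
        show (Fin.snoc (S.memOf g ω t).1 _ : Fin (t+2) → S.Y) j.castSucc = _
        rw [Fin.snoc_castSucc, ih]
        rfl
    · rw [S.memOf_snd g ω (t+1)]
      rfl

lemma memOf_mem_consistent (g : S.Strat) (ω : ℕ → S.W) (t : ℕ) {m : S.Mem t}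
    (h : S.memOf g ω t = m) : ω ∈ S.consistent t m := by
  have h2 : m.2 = fun i : Fin t => S.act g ω i := by rw [← h, S.memOf_snd]
  show S.omem ω t m.2 = m
  rw [h2, ← S.memOf_eq_omem, h]

lemma consistent_mem_memOf (g : S.Strat) : ∀ (t : ℕ) (m : S.Mem t),
    (∃ ω0, S.memOf g ω0 t = m) → ∀ ω ∈ S.consistent t m, S.memOf g ω t = m := by
  intro t
  induction t with
  | zero =>
    intro m _ ω hω
    rw [S.memOf_eq_omem, ← hω]
    congr 1
    exact funext fun i => i.elim0
  | succ t ih =>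
    intro m hm ω hω
    obtain ⟨ω0, hω0⟩ := hm
    have hω' : S.omem ω (t+1) m.2 = m := hω
    have htr : S.memOf g ω t = S.mtrunc m := by
      refine ih (S.mtrunc m) ⟨ω0, by rw [← hω0, S.mtrunc_memOf]⟩ ω ?_
      show S.omem ω t (S.mtrunc m).2 = S.mtrunc m
      have h4 : (S.mtrunc m).2 = Fin.init m.2 := rfl
      rw [h4, ← S.mtrunc_omem, hω']
    have hgt : g t (S.mtrunc m) = m.2 (Fin.last t) := by
      have h3 : S.mtrunc m = S.memOf g ω0 t := by rw [← hω0, S.mtrunc_memOf]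
      rw [h3, ← hω0, S.memOf_snd]
      rfl
    have h4 : (S.mtrunc m).2 = Fin.init m.2 := rfl
    have h5 : (S.mtrunc m).1 = Fin.init m.1 := rfl
    have hus : (Fin.snoc (S.memOf g ω t).2 (g t (S.memOf g ω t)) : Fin (t+1) → S.U) = m.2 := by
      rw [htr, hgt, h4, Fin.snoc_init_self]
    have hlast : S.h t (fun i : Fin (t+1) => ω i) m.2 = m.1 (Fin.last (t+1)) := by
      rw [← hω']
      rfl
    refine Prod.ext ?_ ?_
    · show (Fin.snoc (S.memOf g ω t).1 (S.h t (fun i : Fin (t+1) => ω i)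
          (Fin.snoc (S.memOf g ω t).2 (g t (S.memOf g ω t)))) : Fin (t+2) → S.Y) = m.1
      rw [hus, htr, h5, hlast, Fin.snoc_init_self]
    · show (Fin.snoc (S.memOf g ω t).2 (g t (S.memOf g ω t)) : Fin (t+1) → S.U) = m.2
      exact hus

lemma consistent_eq (g : S.Strat) (t : ℕ) (m : S.Mem t) (hm : ∃ ω0, S.memOf g ω0 t = m) :
    {ω | S.memOf g ω t = m} = S.consistent t m :=
  Set.ext fun ω => ⟨fun h => S.memOf_mem_consistent g ω t h,
    fun h => S.consistent_mem_memOf g t m hm ω h⟩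

lemma consistent_nonempty (g : S.Strat) (t : ℕ) (m : S.Mem t)
    (hm : ∃ ω0, S.memOf g ω0 t = m) : (S.consistent t m).Nonempty := by
  obtain ⟨ω0, h⟩ := hm
  exact ⟨ω0, S.memOf_mem_consistent g ω0 t h⟩

lemma ccost_eq_oc (g : S.Strat) (ω : ℕ → S.W) (ℓ : ℕ) :
    S.ccost g ω ℓ = S.oc ω ℓ (fun i : Fin (ℓ+1) => S.act g ω i) := rfl

lemma cA_eq_oA (g : S.Strat) (ω : ℕ → S.W) (t : ℕ) :
    S.cA g ω t = S.oA ω t (fun i : Fin t => S.act g ω i) := by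
  rw [Sys.cA, ← Fin.sum_univ_eq_sum_range (fun ℓ => S.γ ^ ℓ * S.ccost g ω ℓ) t]
  exact Finset.sum_congr rfl fun ℓ _ => rfl

lemma cA_consistent (g : S.Strat) (ω : ℕ → S.W) (t : ℕ) (m : S.Mem t)
    (h : S.memOf g ω t = m) : S.cA g ω t = S.oA ω t m.2 := by
  rw [S.cA_eq_oA, ← h, S.memOf_snd]

lemma acts_succ (g : S.Strat) (ω : ℕ → S.W) (t : ℕ) (m : S.Mem t)
    (h : S.memOf g ω t = m) :
    (fun i : Fin (t+1) => S.act g ω i) = Fin.snoc m.2 (g t m) := by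
  rw [← S.memOf_snd g ω (t+1)]
  show (Fin.snoc (S.memOf g ω t).2 (g t (S.memOf g ω t)) : Fin (t+1) → S.U) = _
  rw [h]

lemma ccost_consistent (g : S.Strat) (ω : ℕ → S.W) (t : ℕ) (m : S.Mem t)
    (h : S.memOf g ω t = m) :
    S.ccost g ω t = S.oc ω t (Fin.snoc m.2 (g t m)) := by
  rw [S.ccost_eq_oc, S.acts_succ g ω t m h]

lemma memOf_succ (g : S.Strat) (ω : ℕ → S.W) (t : ℕ) (m : S.Mem t)
    (h : S.memOf g ω t = m) :
    S.memOf g ω (t+1) = S.omem ω (t+1) (Fin.snoc m.2 (g t m)) := by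
  rw [S.memOf_eq_omem g ω (t+1)]
  exact congrArg (S.omem ω (t+1)) (S.acts_succ g ω t m h)

lemma ccost_mem (g : S.Strat) (ω : ℕ → S.W) (ℓ : ℕ) :
    S.ccost g ω ℓ ∈ Set.Icc S.cmin S.cmax := S.hcost ℓ _ _

lemma summable_cc (g : S.Strat) (ω : ℕ → S.W) (t : ℕ) :
    Summable (fun k : ℕ => S.γ ^ k * S.ccost g ω (t+k)) := by
  refine Summable.of_nonneg_of_le
    (fun k => mul_nonneg (S.γpow_pos k).le (S.hcmin.trans (S.ccost_mem g ω (t+k)).1))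
    (fun k => mul_le_mul_of_nonneg_left (S.ccost_mem g ω (t+k)).2 (S.γpow_pos k).le) ?_
  exact (summable_geometric_of_lt_one S.hγ0.le S.hγ1).mul_right S.cmax

lemma cCinf_le (g : S.Strat) (ω : ℕ → S.W) (t : ℕ) : S.cCinf g ω t ≤ S.amax := by
  have h1 : S.cCinf g ω t ≤ ∑' k : ℕ, S.γ ^ k * S.cmax :=
    Summable.tsum_le_tsum
      (fun k => mul_le_mul_of_nonneg_left (S.ccost_mem g ω (t+k)).2 (S.γpow_pos k).le)
      (S.summable_cc g ω t)
      ((summable_geometric_of_lt_one S.hγ0.le S.hγ1).mul_right S.cmax)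
  rwa [tsum_mul_right, tsum_geometric_of_lt_one S.hγ0.le S.hγ1, ← div_eq_inv_mul] at h1

lemma cCinf_ge (g : S.Strat) (ω : ℕ → S.W) (t : ℕ) :
    S.cmin / (1 - S.γ) ≤ S.cCinf g ω t := by
  have h1 : ∑' k : ℕ, S.γ ^ k * S.cmin ≤ S.cCinf g ω t :=
    Summable.tsum_le_tsum
      (fun k => mul_le_mul_of_nonneg_left (S.ccost_mem g ω (t+k)).1 (S.γpow_pos k).le)
      ((summable_geometric_of_lt_one S.hγ0.le S.hγ1).mul_right S.cmin)
      (S.summable_cc g ω t)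
  rwa [tsum_mul_right, tsum_geometric_of_lt_one S.hγ0.le S.hγ1, ← div_eq_inv_mul] at h1

lemma cCinf_succ (g : S.Strat) (ω : ℕ → S.W) (t : ℕ) :
    S.cCinf g ω t = S.ccost g ω t + S.γ * S.cCinf g ω (t+1) := by
  rw [Sys.cCinf, Summable.tsum_eq_zero_add (S.summable_cc g ω t)]
  congr 1
  · simp
  · rw [Sys.cCinf, ← tsum_mul_left]
    refine tsum_congr fun k => ?_
    have h2 : t + (k+1) = (t+1) + k := by omega
    rw [pow_succ, h2]
    ring

lemma V_eq (g : S.Strat) (t : ℕ) (m : S.Mem t) (hm : ∃ ω0, S.memOf g ω0 t = m) :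
    S.V g t m =
      sSup ((fun ω => S.oA ω t m.2 + S.γ ^ t * S.cCinf g ω t) '' S.consistent t m) := by
  rw [Sys.V, show {ω | S.memOf g ω t = m} = S.consistent t m from S.consistent_eq g t m hm]
  exact congrArg sSup (Set.image_congr fun ω hω => by
    rw [S.cA_consistent g ω t m (S.consistent_mem_memOf g t m hm ω hω)])

lemma Arange_bddAbove (t : ℕ) (m : S.Mem t) : BddAbove (S.Arange t m) := by
  refine ⟨S.amax, ?_⟩
  rintro a ⟨ω, hω, rfl⟩
  exact S.oA_le_amax ω t m.2

lemma sSup_Arange_nonneg (t : ℕ) (m : S.Mem t) (hc : (S.consistent t m).Nonempty) :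
    0 ≤ sSup (S.Arange t m) := by
  obtain ⟨ω, hω⟩ := hc
  exact (S.oA_nonneg ω t m.2).trans (le_csSup (S.Arange_bddAbove t m) ⟨ω, hω, rfl⟩)

lemma sSup_Arange_le_amax (t : ℕ) (m : S.Mem t) (hc : (S.consistent t m).Nonempty) :
    sSup (S.Arange t m) ≤ S.amax :=
  csSup_le (hc.image _) (by rintro a ⟨ω, hω, rfl⟩; exact S.oA_le_amax ω t m.2)

/-- The fiber of disturbances consistent with `m` that produce cost `c` and next
information state `s`. -/
def fiber {Ss : Type} (σ : (t : ℕ) → S.Mem t → Ss) (t : ℕ) (m : S.Mem t) (u : S.U)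
    (c : ℝ) (s : Ss) : Set (ℕ → S.W) :=
  {ω | ω ∈ S.consistent t m ∧ S.oc ω t (Fin.snoc m.2 u) = c ∧
    σ (t+1) (S.omem ω (t+1) (Fin.snoc m.2 u)) = s}

lemma rcs_eq_of_nonempty {Ss : Type} (σ : (t : ℕ) → S.Mem t → Ss) (t : ℕ) (m : S.Mem t)
    (u : S.U) (c : ℝ) (s : Ss) (hfib : (S.fiber σ t m u c s).Nonempty) :
    S.rcs σ t c s m u =
      ((sSup ((fun ω => S.oA ω t m.2) '' S.fiber σ t m u c s) - sSup (S.Arange t m) : ℝ) :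
        EReal) := by
  have hc : (S.consistent t m).Nonempty := by
    obtain ⟨ω, hω, _⟩ := hfib; exact ⟨ω, hω⟩
  have hA1 : {a | a ∈ Set.Icc 0 S.amax ∧ ∃ ω ∈ S.consistent t m,
      S.oc ω t (Fin.snoc m.2 u) = c ∧ σ (t+1) (S.omem ω (t+1) (Fin.snoc m.2 u)) = s ∧
      S.oA ω t m.2 = a} = (fun ω => S.oA ω t m.2) '' S.fiber σ t m u c s := by
    ext a
    constructor
    · rintro ⟨_, ω, hω, h1, h2, rfl⟩
      exact ⟨ω, ⟨hω, h1, h2⟩, rfl⟩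
    · rintro ⟨ω, ⟨hω, h1, h2⟩, rfl⟩
      exact ⟨⟨S.oA_nonneg ω t m.2, S.oA_le_amax ω t m.2⟩, ω, hω, h1, h2, rfl⟩
  have hA2 : {a | a ∈ Set.Icc 0 S.amax ∧ ∃ ω ∈ S.consistent t m, S.oA ω t m.2 = a} =
      S.Arange t m := by
    ext a
    constructor
    · rintro ⟨_, ω, hω, rfl⟩
      exact ⟨ω, hω, rfl⟩
    · rintro ⟨ω, hω, rfl⟩
      exact ⟨⟨S.oA_nonneg ω t m.2, S.oA_le_amax ω t m.2⟩, ω, hω, rfl⟩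
  have hb1 : BddAbove ((fun ω => S.oA ω t m.2) '' S.fiber σ t m u c s) := by
    refine ⟨S.amax, ?_⟩
    rintro a ⟨ω, _, rfl⟩
    exact S.oA_le_amax ω t m.2
  rw [Sys.rcs, hA1, hA2, ereal_coe_sSup (hfib.image _) hb1,
    ereal_coe_sSup (show (S.Arange t m).Nonempty from hc.image _) (S.Arange_bddAbove t m)]
  exact (EReal.coe_sub _ _).symm

lemma rcs_eq_bot_of_empty {Ss : Type} (σ : (t : ℕ) → S.Mem t → Ss) (t : ℕ) (m : S.Mem t)
    (u : S.U) (c : ℝ) (s : Ss) (hfib : ¬(S.fiber σ t m u c s).Nonempty) :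
    S.rcs σ t c s m u = ⊥ := by
  have hA1 : {a | a ∈ Set.Icc 0 S.amax ∧ ∃ ω ∈ S.consistent t m,
      S.oc ω t (Fin.snoc m.2 u) = c ∧ σ (t+1) (S.omem ω (t+1) (Fin.snoc m.2 u)) = s ∧
      S.oA ω t m.2 = a} = (∅ : Set ℝ) := by
    ext a
    simp only [Set.mem_setOf_eq, Set.mem_empty_iff_false, iff_false]
    rintro ⟨_, ω, hω, h1, h2, rfl⟩
    exact hfib ⟨ω, hω, h1, h2⟩
  rw [Sys.rcs, hA1, Set.image_empty, sSup_empty, EReal.bot_sub]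

/-- Next-step memory generated by `ω` starting from `m` under action `u`. -/
def child (t : ℕ) (m : S.Mem t) (u : S.U) (ω : ℕ → S.W) : S.Mem (t+1) :=
  S.omem ω (t+1) (Fin.snoc m.2 u)

/-- The set of possible next memories. -/
def Kset (t : ℕ) (m : S.Mem t) (u : S.U) : Set (S.Mem (t+1)) :=
  S.child t m u '' S.consistent t m

lemma child_snd (t : ℕ) (m : S.Mem t) (u : S.U) (ω : ℕ → S.W) :
    (S.child t m u ω).2 = Fin.snoc m.2 u := rfl

lemma child_consistent (t : ℕ) (m : S.Mem t) (u : S.U) (ω : ℕ → S.W) :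
    ω ∈ S.consistent (t+1) (S.child t m u ω) := rfl

lemma mem_K_snd {t : ℕ} {m : S.Mem t} {u : S.U} {m' : S.Mem (t+1)}
    (h : m' ∈ S.Kset t m u) : m'.2 = Fin.snoc m.2 u := by
  obtain ⟨ω, _, rfl⟩ := h
  rfl

lemma mtrunc_child {t : ℕ} {m : S.Mem t} {u : S.U} {ω : ℕ → S.W}
    (hω : ω ∈ S.consistent t m) : S.mtrunc (S.child t m u ω) = m := by
  rw [Sys.child, S.mtrunc_omem, Fin.init_snoc]
  exact hω

lemma consistent_child_subset {t : ℕ} {m : S.Mem t} {u : S.U} {m' : S.Mem (t+1)}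
    (h : m' ∈ S.Kset t m u) : S.consistent (t+1) m' ⊆ S.consistent t m := by
  obtain ⟨ω0, hω0, rfl⟩ := h
  intro ω' hω'
  have h1 : S.omem ω' (t+1) (S.child t m u ω0).2 = S.child t m u ω0 := hω'
  have h2 : S.mtrunc (S.omem ω' (t+1) (S.child t m u ω0).2) = m := by
    rw [h1, S.mtrunc_child hω0]
  rw [S.mtrunc_omem] at h2
  have h3 : Fin.init (S.child t m u ω0).2 = m.2 := by
    rw [S.child_snd, Fin.init_snoc]
  rwa [h3] at h2

lemma fiber_K {t : ℕ} {m : S.Mem t} {u : S.U} {m' : S.Mem (t+1)}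
    (h : m' ∈ S.Kset t m u) :
    {ω | ω ∈ S.consistent t m ∧ S.child t m u ω = m'} = S.consistent (t+1) m' := by
  ext ω
  constructor
  · rintro ⟨hω, rfl⟩
    exact S.child_consistent t m u ω
  · intro hω
    refine ⟨S.consistent_child_subset h hω, ?_⟩
    have h1 : S.omem ω (t+1) m'.2 = m' := hω
    rw [Sys.child, ← S.mem_K_snd h]
    exact h1

lemma consistent_biUnion (t : ℕ) (m : S.Mem t) (u : S.U) :
    S.consistent t m = ⋃ m' ∈ S.Kset t m u, S.consistent (t+1) m' := by
  ext ω
  constructor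
  · intro hω
    exact Set.mem_biUnion ⟨ω, hω, rfl⟩ (S.child_consistent t m u ω)
  · intro hω
    rw [Set.mem_iUnion₂] at hω
    obtain ⟨m', hm', hωm'⟩ := hω
    exact S.consistent_child_subset hm' hωm'

lemma Kset_nonempty (t : ℕ) (m : S.Mem t) (u : S.U) (hc : (S.consistent t m).Nonempty) :
    (S.Kset t m u).Nonempty := hc.image _

lemma Kset_consistent_nonempty {t : ℕ} {m : S.Mem t} {u : S.U} {m' : S.Mem (t+1)}
    (h : m' ∈ S.Kset t m u) : (S.consistent (t+1) m').Nonempty := by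
  obtain ⟨ω, hω, rfl⟩ := h
  exact ⟨ω, S.child_consistent t m u ω⟩

lemma Kset_reachable (g : S.Strat) (t : ℕ) (m : S.Mem t) (hm : ∃ ω0, S.memOf g ω0 t = m)
    {m' : S.Mem (t+1)} (h : m' ∈ S.Kset t m (g t m)) :
    ∃ ω0, S.memOf g ω0 (t+1) = m' := by
  obtain ⟨ω, hω, rfl⟩ := h
  refine ⟨ω, ?_⟩
  rw [S.memOf_succ g ω t m (S.consistent_mem_memOf g t m hm ω hω)]
  rfl

lemma V_rec (g : S.Strat) (t : ℕ) (m : S.Mem t) (hm : ∃ ω0, S.memOf g ω0 t = m) :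
    S.V g t m = sSup ((fun m' => S.V g (t+1) m') '' S.Kset t m (g t m)) := by
  have hc : (S.consistent t m).Nonempty := S.consistent_nonempty g t m hm
  rw [S.V_eq g t m hm]
  have hfun : (fun ω => S.oA ω t m.2 + S.γ ^ t * S.cCinf g ω t) '' S.consistent t m =
      (fun ω => S.oA ω (t+1) (Fin.snoc m.2 (g t m)) + S.γ ^ (t+1) * S.cCinf g ω (t+1)) ''
        S.consistent t m := by
    refine Set.image_congr fun ω hω => ?_
    have hmem : S.memOf g ω t = m := S.consistent_mem_memOf g t m hm ω hω
    rw [S.cCinf_succ g ω t, S.ccost_consistent g ω t m hmem, S.oA_succ]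
    ring
  rw [hfun]
  set F := fun ω => S.oA ω (t+1) (Fin.snoc m.2 (g t m)) + S.γ ^ (t+1) * S.cCinf g ω (t+1)
    with hF
  have hbdd : BddAbove (F '' ⋃ m' ∈ S.Kset t m (g t m), S.consistent (t+1) m') := by
    refine ⟨S.amax + S.γ ^ (t+1) * S.amax, ?_⟩
    rintro x ⟨ω, _, rfl⟩
    have h1 := S.oA_le_amax ω (t+1) (Fin.snoc m.2 (g t m))
    have h2 := S.cCinf_le g ω (t+1)
    have h3 := (S.γpow_pos (t+1)).le
    have h4 : S.cmin / (1 - S.γ) ≤ S.cCinf g ω (t+1) := S.cCinf_ge g ω (t+1)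
    have h5 : 0 ≤ S.cmin / (1 - S.γ) := div_nonneg S.hcmin S.one_sub_γ_pos.le
    show S.oA ω (t + 1) (Fin.snoc m.2 (g t m)) + S.γ ^ (t + 1) * S.cCinf g ω (t + 1) ≤ _
    nlinarith
  rw [show S.consistent t m = ⋃ m' ∈ S.Kset t m (g t m), S.consistent (t+1) m' from
    S.consistent_biUnion t m (g t m),
    csSup_biUnion' (S.Kset_nonempty t m (g t m) hc)
      (fun m' h => S.Kset_consistent_nonempty h) hbdd]
  refine congrArg sSup (Set.image_congr fun m' hm' => ?_)
  rw [S.V_eq g (t+1) m' (S.Kset_reachable g t m hm hm')]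
  refine congrArg sSup (Set.image_congr fun ω hω => ?_)
  rw [S.mem_K_snd hm']

lemma lambda_rec {Ss : Type} (σ : (t' : ℕ) → S.Mem t' → Ss) (ρ : ℝ → Ss → Ss → S.U → EReal)
    (hinfo : ∀ (t' : ℕ) (m : S.Mem t') (u : S.U) (c : ℝ) (s : Ss),
      S.rcs σ t' c s m u = ρ c s (σ t' m) u)
    (π : Ss → ℝ → S.U) (g : S.Strat) (hg : ∀ t' m', g t' m' = π (σ t' m') (S.γ ^ t'))
    (Λ : Ss → ℝ → ℝ) (t : ℕ) (m : S.Mem t) (hc : (S.consistent t m).Nonempty)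
    (B : ℝ) (hB : ∀ m' ∈ S.Kset t m (g t m), |Λ (σ (t+1) m') (S.γ ^ (t+1))| ≤ B) :
    S.γ ^ t * DPopLaw S.γ ρ π Λ (σ t m) (S.γ ^ t) + sSup (S.Arange t m) =
      sSup ((fun m' => S.γ ^ (t+1) * Λ (σ (t+1) m') (S.γ ^ (t+1)) + sSup (S.Arange (t+1) m'))
        '' S.Kset t m (g t m)) := by
  have hγt : (0:ℝ) < S.γ ^ t := S.γpow_pos t
  have hγt1 : (0:ℝ) < S.γ ^ (t+1) := S.γpow_pos (t+1)
  have hsA0 : 0 ≤ sSup (S.Arange t m) := S.sSup_Arange_nonneg t m hc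
  have hsA1 : sSup (S.Arange t m) ≤ S.amax := S.sSup_Arange_le_amax t m hc
  set u := g t m with hu
  set sA := sSup (S.Arange t m) with hsA
  set H : (ℕ → S.W) → ℝ := fun ω =>
    S.oc ω t (Fin.snoc m.2 u) + S.γ * Λ (σ (t+1) (S.child t m u ω)) (S.γ ^ (t+1)) +
      (S.oA ω t m.2 - sA) / S.γ ^ t with hH
  set G : ℝ × Ss → ℝ := fun p =>
    p.1 + S.γ * Λ p.2 (S.γ ^ (t+1)) + (ρ p.1 p.2 (σ t m) u).toReal / S.γ ^ t with hG
  set P : Set (ℝ × Ss) := {p | ρ p.1 p.2 (σ t m) u ≠ ⊥} with hP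
  set pmap : (ℕ → S.W) → ℝ × Ss := fun ω =>
    (S.oc ω t (Fin.snoc m.2 u), σ (t+1) (S.child t m u ω)) with hpmap
  have hρ_eq : ∀ (c : ℝ) (s : Ss), ρ c s (σ t m) u = S.rcs σ t c s m u :=
    fun c s => (hinfo t m u c s).symm
  have hDP : DPopLaw S.γ ρ π Λ (σ t m) (S.γ ^ t) = sSup (G '' P) := by
    simp only [hG, hP, DPopLaw, ← pow_succ', ← hg t m, ← hu]
  have hfib_mem : ∀ (p : ℝ × Ss) (ω : ℕ → S.W),
      ω ∈ S.fiber σ t m u p.1 p.2 ↔ ω ∈ S.consistent t m ∧ pmap ω = p := by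
    intro p ω
    constructor
    · rintro ⟨h1, h2, h3⟩
      exact ⟨h1, Prod.ext h2 h3⟩
    · rintro ⟨h1, h2⟩
      exact ⟨h1, congrArg Prod.fst h2, congrArg Prod.snd h2⟩
  have hPC : P = pmap '' S.consistent t m := by
    ext p
    simp only [hP, Set.mem_setOf_eq, Set.mem_image]
    rw [hρ_eq p.1 p.2]
    constructor
    · intro hne
      by_contra hno
      push_neg at hno
      refine hne (S.rcs_eq_bot_of_empty σ t m u p.1 p.2 ?_)
      rintro ⟨ω, hω⟩
      rw [hfib_mem p ω] at hω
      exact hno ω hω.1 hω.2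
    · rintro ⟨ω, hω, rfl⟩
      have hfib : (S.fiber σ t m u (pmap ω).1 (pmap ω).2).Nonempty :=
        ⟨ω, (hfib_mem _ ω).mpr ⟨hω, rfl⟩⟩
      rw [S.rcs_eq_of_nonempty σ t m u _ _ hfib]
      exact EReal.coe_ne_bot _
  have hCU : S.consistent t m = ⋃ p ∈ P, S.fiber σ t m u p.1 p.2 := by
    ext ω
    constructor
    · intro hω
      have hpmem : pmap ω ∈ P := by rw [hPC]; exact ⟨ω, hω, rfl⟩
      exact Set.mem_biUnion hpmem ((hfib_mem _ ω).mpr ⟨hω, rfl⟩)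
    · intro hω
      rw [Set.mem_iUnion₂] at hω
      obtain ⟨p, _, hωp⟩ := hω
      exact hωp.1
  have hHbdd : BddAbove (H '' S.consistent t m) := by
    refine ⟨S.cmax + S.γ * B + S.amax / S.γ ^ t, ?_⟩
    rintro x ⟨ω, hω, rfl⟩
    have h1 := (S.oc_mem ω t (Fin.snoc m.2 u)).2
    have h2 := abs_le.mp (hB _ ⟨ω, hω, rfl⟩)
    have h3 := S.oA_le_amax ω t m.2
    have h4 : (S.oA ω t m.2 - sA) / S.γ ^ t ≤ S.amax / S.γ ^ t := by
      gcongr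
      linarith
    have h6 : S.γ * Λ (σ (t+1) (S.child t m u ω)) (S.γ ^ (t+1)) ≤ S.γ * B :=
      mul_le_mul_of_nonneg_left h2.2 S.hγ0.le
    simp only [hH]
    linarith
  have hPne : P.Nonempty := by rw [hPC]; exact hc.image _
  have hfibne : ∀ p ∈ P, (S.fiber σ t m u p.1 p.2).Nonempty := by
    intro p hp
    rw [hPC] at hp
    obtain ⟨ω, hω, rfl⟩ := hp
    exact ⟨ω, (hfib_mem _ ω).mpr ⟨hω, rfl⟩⟩
  have hstep1 : sSup (H '' S.consistent t m) = sSup (G '' P) := by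
    have h0 : H '' S.consistent t m = H '' ⋃ p ∈ P, S.fiber σ t m u p.1 p.2 := by rw [← hCU]
    rw [h0, csSup_biUnion' hPne hfibne (h0 ▸ hHbdd)]
    refine congrArg sSup (Set.image_congr fun p hp => ?_)
    have hfp := hfibne p hp
    have himg : H '' S.fiber σ t m u p.1 p.2 =
        (fun x => (S.γ ^ t)⁻¹ * x + (p.1 + S.γ * Λ p.2 (S.γ ^ (t+1)) - sA / S.γ ^ t)) ''
          ((fun ω => S.oA ω t m.2) '' S.fiber σ t m u p.1 p.2) := by
      rw [← Set.image_comp]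
      refine Set.image_congr fun ω hω => ?_
      obtain ⟨h1, h2, h3⟩ := hω
      simp only [hH, Sys.child, Function.comp]
      rw [h2, h3]
      field_simp
      ring
    rw [himg, csSup_affine_image (hfp.image _)
      (⟨S.amax, by rintro a ⟨ω, _, rfl⟩; exact S.oA_le_amax ω t m.2⟩ :
        BddAbove ((fun ω => S.oA ω t m.2) '' S.fiber σ t m u p.1 p.2))
      (inv_pos.mpr hγt) _]
    simp only [hG]
    rw [hρ_eq p.1 p.2, S.rcs_eq_of_nonempty σ t m u p.1 p.2 hfp, EReal.toReal_coe, ← hsA]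
    field_simp
    ring
  have hHne : (H '' S.consistent t m).Nonempty := hc.image _
  set H2 : (ℕ → S.W) → ℝ := fun ω =>
    S.oA ω (t+1) (Fin.snoc m.2 u) +
      S.γ ^ (t+1) * Λ (σ (t+1) (S.child t m u ω)) (S.γ ^ (t+1)) with hH2
  have hstep2 : S.γ ^ t * sSup (H '' S.consistent t m) + sA =
      sSup (H2 '' S.consistent t m) := by
    rw [← csSup_affine_image hHne hHbdd hγt sA, ← Set.image_comp]
    refine congrArg sSup (Set.image_congr fun ω hω => ?_)
    simp only [hH, hH2, Function.comp]
    rw [S.oA_succ, pow_succ]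
    field_simp
    ring
  have hH2bdd : BddAbove (H2 '' ⋃ m' ∈ S.Kset t m u, S.consistent (t+1) m') := by
    refine ⟨S.amax + S.γ ^ (t+1) * B, ?_⟩
    rintro x ⟨ω, hω, rfl⟩
    rw [← S.consistent_biUnion t m u] at hω
    have h1 := S.oA_le_amax ω (t+1) (Fin.snoc m.2 u)
    have h2 := abs_le.mp (hB _ ⟨ω, hω, rfl⟩)
    have h3 : S.γ ^ (t+1) * Λ (σ (t+1) (S.child t m u ω)) (S.γ ^ (t+1)) ≤ S.γ ^ (t+1) * B :=
      mul_le_mul_of_nonneg_left h2.2 hγt1.le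
    simp only [hH2]
    linarith
  have hstep3 : sSup (H2 '' S.consistent t m) =
      sSup ((fun m' => S.γ ^ (t+1) * Λ (σ (t+1) m') (S.γ ^ (t+1)) +
        sSup (S.Arange (t+1) m')) '' S.Kset t m u) := by
    have h0 : H2 '' S.consistent t m = H2 '' ⋃ m' ∈ S.Kset t m u, S.consistent (t+1) m' := by
      rw [← S.consistent_biUnion t m u]
    rw [h0, csSup_biUnion' (S.Kset_nonempty t m u hc)
      (fun m' h => S.Kset_consistent_nonempty h) hH2bdd]
    refine congrArg sSup (Set.image_congr fun m' hm' => ?_)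
    have hchild : ∀ ω ∈ S.consistent (t+1) m', S.child t m u ω = m' := by
      intro ω hω
      have := (S.fiber_K hm').symm ▸ hω
      exact this.2
    have himg : H2 '' S.consistent (t+1) m' =
        (fun x => x + S.γ ^ (t+1) * Λ (σ (t+1) m') (S.γ ^ (t+1))) ''
          ((fun ω => S.oA ω (t+1) m'.2) '' S.consistent (t+1) m') := by
      rw [← Set.image_comp]
      refine Set.image_congr fun ω hω => ?_
      simp only [hH2, Function.comp]
      rw [hchild ω hω, S.mem_K_snd hm']
    rw [himg, csSup_add_const ((S.Kset_consistent_nonempty hm').image _)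
      (⟨S.amax, by rintro a ⟨ω, _, rfl⟩; exact S.oA_le_amax ω (t+1) m'.2⟩ :
        BddAbove ((fun ω => S.oA ω (t+1) m'.2) '' S.consistent (t+1) m')) _]
    rw [add_comm]
    rfl
  rw [hDP, ← hstep1, hstep2, hstep3]

lemma γpow_le_one (t : ℕ) : S.γ ^ t ≤ 1 := pow_le_one₀ S.hγ0.le S.hγ1.le

lemma V_bddAbove (g : S.Strat) (t : ℕ) (m : S.Mem t) :
    BddAbove ((fun ω => S.oA ω t m.2 + S.γ ^ t * S.cCinf g ω t) '' S.consistent t m) := by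
  refine ⟨S.amax + S.amax, ?_⟩
  rintro x ⟨ω, hω, rfl⟩
  have h1 := S.oA_le_amax ω t m.2
  have h2 := S.cCinf_le g ω t
  have h3 := S.γpow_le_one t
  have h4 := (S.γpow_pos t).le
  have h5 := S.amax_nonneg
  have h6 : S.γ ^ t * S.cCinf g ω t ≤ S.amax := by nlinarith
  dsimp only
  linarith

lemma V_nonneg (g : S.Strat) (t : ℕ) (m : S.Mem t) (hm : ∃ ω0, S.memOf g ω0 t = m) :
    0 ≤ S.V g t m := by
  obtain ⟨ω0, hω0⟩ := hm
  have hω0' := S.memOf_mem_consistent g ω0 t hω0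
  rw [S.V_eq g t m ⟨ω0, hω0⟩]
  have h1 : (0:ℝ) ≤ S.oA ω0 t m.2 + S.γ ^ t * S.cCinf g ω0 t := by
    have := S.oA_nonneg ω0 t m.2
    have h2 : 0 ≤ S.cCinf g ω0 t :=
      (div_nonneg S.hcmin S.one_sub_γ_pos.le).trans (S.cCinf_ge g ω0 t)
    nlinarith [(S.γpow_pos t).le]
  exact h1.trans (le_csSup (S.V_bddAbove g t m) ⟨ω0, hω0', rfl⟩)

lemma V_le (g : S.Strat) (t : ℕ) (m : S.Mem t) (hm : ∃ ω0, S.memOf g ω0 t = m) :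
    S.V g t m ≤ 2 * S.amax := by
  rw [S.V_eq g t m hm]
  refine csSup_le ((S.consistent_nonempty g t m hm).image _) ?_
  rintro x ⟨ω, hω, rfl⟩
  have h := S.V_bddAbove g t m
  obtain ⟨M, hM⟩ := h
  have h1 := S.oA_le_amax ω t m.2
  have h2 := S.cCinf_le g ω t
  have h3 := S.γpow_le_one t
  have h4 := (S.γpow_pos t).le
  have h5 := S.amax_nonneg
  have h6 : S.γ ^ t * S.cCinf g ω t ≤ S.amax := by nlinarith
  dsimp only
  linarith

end Sys

theorem stmt8 (S : Sys) {Ss : Type} [Nonempty Ss] [MetricSpace Ss]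
    (hSb : Bornology.IsBounded (Set.univ : Set Ss))
    (σ : (t : ℕ) → S.Mem t → Ss) (ρ : ℝ → Ss → Ss → S.U → EReal)
    (hρ : ∀ c s' s u, ρ c s' s u = ⊥ ∨
      ∃ x : ℝ, ρ c s' s u = (x : EReal) ∧ x ∈ Set.Icc (-S.amax) 0)
    (hinfo : ∀ (t : ℕ) (m : S.Mem t) (u : S.U) (c : ℝ) (s : Ss),
      S.rcs σ t c s m u = ρ c s (σ t m) u)
    (π : Ss → ℝ → S.U) (g : S.Strat) (hg : ∀ t m, g t m = π (σ t m) (S.γ ^ t))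
    (n t : ℕ) (m : S.Mem t) (hm : ∃ ω, S.memOf g ω t = m) :
    S.γ ^ (n+t) * S.cmin / (1 - S.γ) + S.γ ^ t * DPopLawIter S.γ ρ π n (σ t m) (S.γ ^ t)
        + sSup (S.Arange t m) ≤ S.V g t m ∧
      S.V g t m ≤ sSup (S.Arange t m) + S.γ ^ t * DPopLawIter S.γ ρ π n (σ t m) (S.γ ^ t)
        + S.γ ^ (n+t) * S.cmax / (1 - S.γ) := by
  induction n generalizing t m with
  | zero =>
    have hc := S.consistent_nonempty g t m hm
    rw [S.V_eq g t m hm]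
    simp only [DPopLawIter, mul_zero, add_zero, zero_add]
    have heqmin : S.γ ^ t * S.cmin / (1 - S.γ) = S.γ ^ t * (S.cmin / (1 - S.γ)) :=
      mul_div_assoc _ _ _
    have heqmax : S.γ ^ t * S.cmax / (1 - S.γ) = S.γ ^ t * (S.cmax / (1 - S.γ)) :=
      mul_div_assoc _ _ _
    constructor
    · have key : ∀ x ∈ S.Arange t m,
          x ≤ sSup ((fun ω => S.oA ω t m.2 + S.γ ^ t * S.cCinf g ω t) '' S.consistent t m)
            - S.γ ^ t * S.cmin / (1 - S.γ) := by
        rintro x ⟨ω, hω, rfl⟩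
        have h1 : S.oA ω t m.2 + S.γ ^ t * S.cCinf g ω t ≤
            sSup ((fun ω => S.oA ω t m.2 + S.γ ^ t * S.cCinf g ω t) '' S.consistent t m) :=
          le_csSup (S.V_bddAbove g t m) ⟨ω, hω, rfl⟩
        have h2 := S.cCinf_ge g ω t
        have h3 : S.γ ^ t * (S.cmin / (1 - S.γ)) ≤ S.γ ^ t * S.cCinf g ω t :=
          mul_le_mul_of_nonneg_left h2 (S.γpow_pos t).le
        linarith
      have h4 : sSup (S.Arange t m) ≤
          sSup ((fun ω => S.oA ω t m.2 + S.γ ^ t * S.cCinf g ω t) '' S.consistent t m)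
            - S.γ ^ t * S.cmin / (1 - S.γ) := csSup_le (hc.image _) key
      linarith
    · refine csSup_le (hc.image _) ?_
      rintro x ⟨ω, hω, rfl⟩
      have h1 : S.oA ω t m.2 ≤ sSup (S.Arange t m) :=
        le_csSup (S.Arange_bddAbove t m) ⟨ω, hω, rfl⟩
      have h2 := S.cCinf_le g ω t
      have h3 : S.γ ^ t * S.cCinf g ω t ≤ S.γ ^ t * S.amax :=
        mul_le_mul_of_nonneg_left h2 (S.γpow_pos t).le
      have h4 : S.γ ^ t * S.amax = S.γ ^ t * S.cmax / (1 - S.γ) := by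
        rw [Sys.amax, mul_div_assoc]
      dsimp only
      linarith
  | succ n ih =>
    have hc := S.consistent_nonempty g t m hm
    have hreach : ∀ m' ∈ S.Kset t m (g t m), ∃ ω0, S.memOf g ω0 (t+1) = m' :=
      fun m' h => S.Kset_reachable g t m hm h
    have hγt1 : (0:ℝ) < S.γ ^ (t+1) := S.γpow_pos (t+1)
    set B := 2 * S.amax / S.γ ^ (t+1) with hBdef
    have hBmul : S.γ ^ (t+1) * B = 2 * S.amax := by
      rw [hBdef]; field_simp
    have hB : ∀ m' ∈ S.Kset t m (g t m),
        |DPopLawIter S.γ ρ π n (σ (t+1) m') (S.γ ^ (t+1))| ≤ B := by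
      intro m' hm'
      have hre := hreach m' hm'
      obtain ⟨hlo, hhi⟩ := ih (t+1) m' hre
      have hV0 := S.V_nonneg g (t+1) m' hre
      have hV2 := S.V_le g (t+1) m' hre
      have hc' := S.consistent_nonempty g (t+1) m' hre
      have hsA'0 := S.sSup_Arange_nonneg (t+1) m' hc'
      have hsA'1 := S.sSup_Arange_le_amax (t+1) m' hc'
      have hγk : S.γ ^ (n+(t+1)) ≤ 1 := S.γpow_le_one _
      have hγkpos := (S.γpow_pos (n+(t+1))).le
      have hamax := S.amax_nonneg
      have hterm_le : S.γ ^ (n+(t+1)) * S.cmax / (1 - S.γ) ≤ S.amax := by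
        rw [Sys.amax]
        refine (div_le_div_iff_of_pos_right S.one_sub_γ_pos).mpr ?_
        nlinarith [S.cmax_nonneg]
      have hterm_ge : 0 ≤ S.γ ^ (n+(t+1)) * S.cmin / (1 - S.γ) :=
        div_nonneg (mul_nonneg hγkpos S.hcmin) S.one_sub_γ_pos.le
      have h1 : S.γ ^ (t+1) * DPopLawIter S.γ ρ π n (σ (t+1) m') (S.γ ^ (t+1)) ≤
          2 * S.amax := by linarith
      have h2 : -(2 * S.amax) ≤
          S.γ ^ (t+1) * DPopLawIter S.γ ρ π n (σ (t+1) m') (S.γ ^ (t+1)) := by linarith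
      rw [abs_le]
      constructor
      · have h3 : S.γ ^ (t+1) * (-B) ≤
            S.γ ^ (t+1) * DPopLawIter S.γ ρ π n (σ (t+1) m') (S.γ ^ (t+1)) := by
          rw [mul_neg, hBmul]; exact h2
        exact (mul_le_mul_iff_right₀ hγt1).mp h3
      · have h3 : S.γ ^ (t+1) * DPopLawIter S.γ ρ π n (σ (t+1) m') (S.γ ^ (t+1)) ≤
            S.γ ^ (t+1) * B := by rw [hBmul]; exact h1
        exact (mul_le_mul_iff_right₀ hγt1).mp h3
    have hLR := S.lambda_rec σ ρ hinfo π g hg (DPopLawIter S.γ ρ π n) t m hc B hB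
    have hVrec := S.V_rec g t m hm
    set Φ : S.Mem (t+1) → ℝ := fun m' =>
      S.γ ^ (t+1) * DPopLawIter S.γ ρ π n (σ (t+1) m') (S.γ ^ (t+1)) +
        sSup (S.Arange (t+1) m') with hΦ
    have hΦbdd : BddAbove (Φ '' S.Kset t m (g t m)) := by
      refine ⟨2 * S.amax + S.amax, ?_⟩
      rintro x ⟨m', hm', rfl⟩
      have h2 := abs_le.mp (hB m' hm')
      have h3 : S.γ ^ (t+1) * DPopLawIter S.γ ρ π n (σ (t+1) m') (S.γ ^ (t+1)) ≤
          S.γ ^ (t+1) * B := mul_le_mul_of_nonneg_left h2.2 hγt1.le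
      have h4 := S.sSup_Arange_le_amax (t+1) m' (S.Kset_consistent_nonempty hm')
      simp only [hΦ]
      linarith [hBmul]
    have hVbdd : BddAbove ((fun m' => S.V g (t+1) m') '' S.Kset t m (g t m)) :=
      ⟨2 * S.amax, by rintro x ⟨m', hm', rfl⟩; exact S.V_le g (t+1) m' (hreach m' hm')⟩
    have hKne := S.Kset_nonempty t m (g t m) hc
    have hexp : S.γ ^ (n + 1 + t) = S.γ ^ (n + (t+1)) := by
      congr 1; omega
    simp only [DPopLawIter]
    constructor
    · have hstep : ∀ x ∈ Φ '' S.Kset t m (g t m),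
          x ≤ S.V g t m - S.γ ^ (n+(t+1)) * S.cmin / (1 - S.γ) := by
        rintro x ⟨m', hm', rfl⟩
        have hlo := (ih (t+1) m' (hreach m' hm')).1
        have hVle : S.V g (t+1) m' ≤ S.V g t m := by
          rw [hVrec]; exact le_csSup hVbdd ⟨m', hm', rfl⟩
        simp only [hΦ]
        linarith
      have h5 := csSup_le (hKne.image _) hstep
      rw [← hLR] at h5
      rw [hexp]
      linarith
    · rw [hVrec]
      refine csSup_le (hKne.image _) ?_
      rintro x ⟨m', hm', rfl⟩
      have hhi := (ih (t+1) m' (hreach m' hm')).2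
      have hΦle : Φ m' ≤ sSup (Φ '' S.Kset t m (g t m)) := le_csSup hΦbdd ⟨m', hm', rfl⟩
      rw [← hLR] at hΦle
      simp only [hΦ] at hhi hΦle ⊢
      rw [hexp]
      linarith
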